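/- Under the Mallows model with identity central ranking and dispersion q ∈ (0,1), the probability that a random permutation has a given top-k list π_k as its first k entries equals q^{d_K(π_k)} · ψ(n-k, q) / ψ(n, q), where d_K(π_k) = Σ_{i=1}^{k} ( Σ_{j=i+1}^{k} 1{π_k(i) > π_k(j)} + Σ_{j ∉ R(π_k)} 1{π_k(i) > j} ). Equivalently, the sum of q^{d_K(π)} over all permutations π extending π_k equals q^{d_K(π_k)} · ψ(n-k, q). -/

import Mathlib

open Finset

/-- ψ(m,q) = ∏_{i=1}^{m} (1 + q + ... + q^{i-1}). -/
def psi (n : ℕ) (q : ℝ) : ℝ := ∏ i ∈ Finset.range n, ∑ j ∈ Finset.range (i + 1), q ^ j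

/-- Kendall tau distance (inversion count) of a full permutation from the identity. -/
def dK {n : ℕ} (π : Equiv.Perm (Fin n)) : ℕ :=
  ∑ i : Fin n, ∑ j : Fin n, if i < j ∧ π j < π i then 1 else 0

/-- Kendall tau statistic of a top-k list: inversions among the listed items plus
inversions between listed items and smaller unlisted items. -/
def dKtop {n k : ℕ} (f : Fin k → Fin n) : ℕ :=
  ∑ i : Fin k,
    ((∑ j : Fin k, if i < j ∧ f j < f i then 1 else 0) +
      (Finset.univ.filter
        (fun x : Fin n => x ∉ Finset.image f Finset.univ ∧ x < f i)).card)

lemma psi_pos {q : ℝ} (hq : 0 < q) (n : ℕ) : 0 < psi n q := by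
  apply Finset.prod_pos
  intro i _
  apply Finset.sum_pos (fun j _ => pow_pos hq j)
  simp

lemma psi_succ (m : ℕ) (q : ℝ) :
    psi (m + 1) q = psi m q * ∑ j ∈ Finset.range (m + 1), q ^ j := by
  simp [psi, Finset.prod_range_succ]

lemma sum_rank {n : ℕ} (q : ℝ) (T : Finset (Fin n)) :
    ∑ x ∈ T, q ^ (T.filter (fun y => y < x)).card = ∑ j ∈ Finset.range T.card, q ^ j := by
  induction T using Finset.induction_on_max with
  | empty => simp
  | insert a s ha ih =>
    have has : a ∉ s := fun h => lt_irrefl a (ha a h)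
    rw [Finset.sum_insert has, Finset.card_insert_of_notMem has,
      Finset.sum_range_succ]
    have h1 : (insert a s).filter (fun y => y < a) = s := by
      ext y
      simp only [Finset.mem_filter, Finset.mem_insert]
      constructor
      · rintro ⟨h | h, hy⟩
        · exact absurd (h ▸ hy) (lt_irrefl a)
        · exact h
      · exact fun h => ⟨Or.inr h, ha y h⟩
    have h2 : ∀ x ∈ s, (insert a s).filter (fun y => y < x) = s.filter (fun y => y < x) := by
      intro x hx
      rw [Finset.filter_insert, if_neg (by exact fun h => absurd (h.trans (ha x hx)) (lt_irrefl a))]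
    rw [h1, Finset.sum_congr rfl (fun x hx => by rw [h2 x hx]), ih]
    ring

lemma image_snoc {n k : ℕ} (f : Fin k → Fin n) (x : Fin n) :
    Finset.image (Fin.snoc f x : Fin (k+1) → Fin n) Finset.univ
      = insert x (Finset.image f Finset.univ) := by
  ext y
  simp only [Finset.mem_image, Finset.mem_insert, Finset.mem_univ, true_and]
  constructor
  · rintro ⟨i, rfl⟩
    cases i using Fin.lastCases with
    | last => simp
    | cast i => simp
  · rintro (rfl | ⟨i, _, rfl⟩)
    · exact ⟨Fin.last k, by simp⟩
    · exact ⟨i.castSucc, by simp⟩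

lemma snoc_injective {n k : ℕ} {f : Fin k → Fin n} {x : Fin n}
    (hf : Function.Injective f) (hx : x ∉ Finset.image f Finset.univ) :
    Function.Injective (Fin.snoc f x : Fin (k+1) → Fin n) := by
  intro a b hab
  have hx' : ∀ i : Fin k, f i ≠ x := by
    intro i h
    exact hx (Finset.mem_image.mpr ⟨i, Finset.mem_univ i, h⟩)
  cases a using Fin.lastCases with
  | last =>
    cases b using Fin.lastCases with
    | last => rfl
    | cast b => simp at hab; exact absurd hab.symm (hx' b)
  | cast a =>
    cases b using Fin.lastCases with
    | last => simp at hab; exact absurd hab (hx' a)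
    | cast b => simp at hab; exact congrArg Fin.castSucc (hf hab)

lemma dKtop_snoc {n k : ℕ} (f : Fin k → Fin n) (x : Fin n)
    (hx : x ∉ Finset.image f Finset.univ) :
    dKtop (Fin.snoc f x : Fin (k+1) → Fin n)
      = dKtop f +
        ((Finset.univ.filter (fun y : Fin n => y ∉ Finset.image f Finset.univ)).filter
          (fun y => y < x)).card := by
  unfold dKtop
  rw [Fin.sum_univ_castSucc]
  -- last term
  have hlast : (∑ j : Fin (k+1), if Fin.last k < j ∧ (Fin.snoc f x : Fin (k+1) → Fin n) j < (Fin.snoc f x : Fin (k+1) → Fin n) (Fin.last k) then 1 else 0) = 0 := by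
    apply Finset.sum_eq_zero
    intro j _
    rw [if_neg]
    rintro ⟨h, -⟩
    exact absurd (Fin.le_last j) (not_le.mpr h)
  have hlast2 : (Finset.univ.filter
        (fun y : Fin n => y ∉ Finset.image (Fin.snoc f x : Fin (k+1) → Fin n) Finset.univ ∧ y < (Fin.snoc f x : Fin (k+1) → Fin n) (Fin.last k))).card
      = ((Finset.univ.filter (fun y : Fin n => y ∉ Finset.image f Finset.univ)).filter
          (fun y => y < x)).card := by
    congr 1
    rw [Finset.filter_filter]
    ext y
    simp only [Finset.mem_filter, Finset.mem_univ, true_and, image_snoc, Finset.mem_insert,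
      Fin.snoc_last, not_or]
    constructor
    · rintro ⟨⟨-, h2⟩, h3⟩; exact ⟨h2, h3⟩
    · rintro ⟨h2, h3⟩; exact ⟨⟨ne_of_lt h3, h2⟩, h3⟩
  rw [hlast, hlast2, zero_add]
  congr 1
  apply Finset.sum_congr rfl
  intro i _
  -- castSucc term
  have hA : (∑ j : Fin (k+1), if i.castSucc < j ∧ (Fin.snoc f x : Fin (k+1) → Fin n) j < (Fin.snoc f x : Fin (k+1) → Fin n) i.castSucc then 1 else 0)
      = (∑ j : Fin k, if i < j ∧ f j < f i then 1 else 0) + (if x < f i then 1 else 0) := by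
    rw [Fin.sum_univ_castSucc]
    congr 1
    · apply Finset.sum_congr rfl
      intro j _
      simp [Fin.castSucc_lt_castSucc_iff]
    · simp [Fin.castSucc_lt_last]
  rw [hA]
  -- card term
  have hxni : ∀ p : Fin n → Prop, True := fun _ => trivial
  set s1 := Finset.univ.filter (fun y : Fin n => y ∉ Finset.image f Finset.univ ∧ y < f i) with hs1
  set s2 := Finset.univ.filter
        (fun y : Fin n => y ∉ Finset.image (Fin.snoc f x : Fin (k+1) → Fin n) Finset.univ ∧ y < (Fin.snoc f x : Fin (k+1) → Fin n) i.castSucc) with hs2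
  have hs2' : s2 = s1.erase x := by
    ext y
    simp only [hs1, hs2, Finset.mem_erase, Finset.mem_filter, Finset.mem_univ, true_and,
      image_snoc, Finset.mem_insert, not_or, Fin.snoc_castSucc]
    tauto
  have hcard : s1.card = s2.card + (if x < f i then 1 else 0) := by
    rw [hs2']
    by_cases hxi : x < f i
    · have hxs1 : x ∈ s1 := by
        simp only [hs1, Finset.mem_filter, Finset.mem_univ, true_and]
        exact ⟨hx, hxi⟩
      have h1 : 1 ≤ s1.card := Finset.card_pos.mpr ⟨x, hxs1⟩
      rw [if_pos hxi, Finset.card_erase_of_mem hxs1]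
      omega
    · have hxs1 : x ∉ s1 := by
        simp only [hs1, Finset.mem_filter, Finset.mem_univ, true_and]
        rintro ⟨-, h⟩; exact hxi h
      rw [if_neg hxi, Finset.erase_eq_of_notMem hxs1, add_zero]
  rw [hcard]
  ring

lemma key (n : ℕ) (q : ℝ) : ∀ (m k : ℕ) (hkn : k ≤ n), n - k = m →
    ∀ f : Fin k → Fin n, Function.Injective f →
    (∑ π : Equiv.Perm (Fin n),
        if ∀ i : Fin k, π (Fin.castLE hkn i) = f i then q ^ dK π else 0)
      = q ^ dKtop f * psi m q := by
  intro m
  induction m with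
  | zero =>
    intro k hkn hm f hf
    have hk : k = n := by omega
    subst hk
    have hbij : Function.Bijective f := (Finite.injective_iff_bijective).mp hf
    set e := Equiv.ofBijective f hbij with he
    have hcond : ∀ π : Equiv.Perm (Fin k),
        (∀ i : Fin k, π (Fin.castLE hkn i) = f i) ↔ π = e := by
      intro π
      rw [Equiv.ext_iff]
      exact forall_congr' (fun i => by rfl)
    have h1 : (∑ π : Equiv.Perm (Fin k),
        if ∀ i : Fin k, π (Fin.castLE hkn i) = f i then q ^ dK π else 0)
        = q ^ dK e := by
      rw [Finset.sum_congr rfl (fun π _ => by rw [if_congr (hcond π) rfl rfl])]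
      rw [Finset.sum_ite_eq' Finset.univ e (fun π => q ^ dK π), if_pos (Finset.mem_univ e)]
    rw [h1]
    have himg : Finset.image f Finset.univ = Finset.univ :=
      Finset.image_univ_of_surjective hbij.2
    have h2 : dK e = dKtop f := by
      unfold dK dKtop
      apply Finset.sum_congr rfl
      intro i _
      rw [himg]
      simp [e]
    rw [h2]
    simp [psi]
  | succ m ih =>
    intro k hkn hm f hf
    have hk : k < n := by omega
    have hk1 : k + 1 ≤ n := hk
    set T : Finset (Fin n) := Finset.univ.filter (fun y => y ∉ Finset.image f Finset.univ) with hT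
    have hQ : ∀ (x : Fin n) (π : Equiv.Perm (Fin n)),
        (∀ i : Fin (k+1), π (Fin.castLE hk1 i) = (Fin.snoc f x : Fin (k+1) → Fin n) i) ↔
        ((∀ i : Fin k, π (Fin.castLE hkn i) = f i) ∧ π ⟨k, hk⟩ = x) := by
      intro x π
      constructor
      · intro h
        refine ⟨fun i => ?_, ?_⟩
        · have h2 := h i.castSucc
          rwa [Fin.snoc_castSucc, show Fin.castLE hk1 i.castSucc = Fin.castLE hkn i from rfl] at h2
        · have h2 := h (Fin.last k)
          rwa [Fin.snoc_last, show Fin.castLE hk1 (Fin.last k) = ⟨k, hk⟩ from rfl] at h2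
      · rintro ⟨h1, h2⟩ i
        cases i using Fin.lastCases with
        | last => rwa [Fin.snoc_last, show Fin.castLE hk1 (Fin.last k) = ⟨k, hk⟩ from rfl]
        | cast i =>
          rw [Fin.snoc_castSucc, show Fin.castLE hk1 i.castSucc = Fin.castLE hkn i from rfl]
          exact h1 i
    have hstep : ∀ π : Equiv.Perm (Fin n),
        (if ∀ i : Fin k, π (Fin.castLE hkn i) = f i then q ^ dK π else 0)
        = ∑ x ∈ T, (if ∀ i : Fin (k+1), π (Fin.castLE hk1 i) = (Fin.snoc f x : Fin (k+1) → Fin n) i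
            then q ^ dK π else 0) := by
      intro π
      by_cases hP : ∀ i : Fin k, π (Fin.castLE hkn i) = f i
      · rw [if_pos hP]
        set x0 := π ⟨k, hk⟩ with hx0
        have hx0T : x0 ∈ T := by
          rw [hT, Finset.mem_filter]
          refine ⟨Finset.mem_univ _, ?_⟩
          intro hmem
          obtain ⟨i, -, hi⟩ := Finset.mem_image.mp hmem
          rw [← hP i] at hi
          have := π.injective hi
          have : (Fin.castLE hkn i : Fin n).val = k := by rw [this]
          simp at this
          omega
        rw [Finset.sum_eq_single_of_mem x0 hx0T]
        · rw [if_pos ((hQ x0 π).mpr ⟨hP, rfl⟩)]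
        · intro x hxT hne
          rw [if_neg]
          intro h
          exact hne (((hQ x π).mp h).2.symm)
      · rw [if_neg hP, eq_comm]
        apply Finset.sum_eq_zero
        intro x _
        rw [if_neg]
        intro h
        exact hP ((hQ x π).mp h).1
    rw [Finset.sum_congr rfl (fun π _ => hstep π), Finset.sum_comm]
    have hrewrite : ∀ x ∈ T,
        (∑ π : Equiv.Perm (Fin n),
          if ∀ i : Fin (k+1), π (Fin.castLE hk1 i) = (Fin.snoc f x : Fin (k+1) → Fin n) i then q ^ dK π else 0)
        = q ^ (dKtop f + (T.filter (fun y => y < x)).card) * psi m q := by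
      intro x hxT
      have hxnotin : x ∉ Finset.image f Finset.univ := (Finset.mem_filter.mp hxT).2
      rw [ih (k+1) hk1 (by omega) (Fin.snoc f x) (snoc_injective hf hxnotin),
        dKtop_snoc f x hxnotin]
    rw [Finset.sum_congr rfl hrewrite]
    have hTcard : T.card = m + 1 := by
      have h1 : (Finset.image f Finset.univ).card = k := by
        rw [Finset.card_image_of_injective _ hf, Finset.card_univ, Fintype.card_fin]
      have h2 : T = (Finset.image f Finset.univ)ᶜ := by
        rw [hT]; ext y; simp
      rw [h2, Finset.card_compl, h1, Fintype.card_fin]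
      omega
    have : ∑ x ∈ T, q ^ (dKtop f + (T.filter (fun y => y < x)).card) * psi m q
        = q ^ dKtop f * psi m q * ∑ x ∈ T, q ^ (T.filter (fun y => y < x)).card := by
      rw [Finset.mul_sum]
      apply Finset.sum_congr rfl
      intro x _
      rw [pow_add]
      ring
    rw [this, sum_rank q T, hTcard, psi_succ m q]
    ring

theorem stmt11 (n k : ℕ) (hkn : k ≤ n) (q : ℝ) (hq0 : 0 < q) (hq1 : q < 1)
    (f : Fin k → Fin n) (hf : Function.Injective f) :
    (∑ π : Equiv.Perm (Fin n),
        if ∀ i : Fin k, π (Fin.castLE hkn i) = f i then q ^ dK π / psi n q else 0)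
      = q ^ dKtop f * psi (n - k) q / psi n q ∧
    (∑ π : Equiv.Perm (Fin n),
        if ∀ i : Fin k, π (Fin.castLE hkn i) = f i then q ^ dK π else 0)
      = q ^ dKtop f * psi (n - k) q := by
  have h2 : (∑ π : Equiv.Perm (Fin n),
      if ∀ i : Fin k, π (Fin.castLE hkn i) = f i then q ^ dK π else 0)
      = q ^ dKtop f * psi (n - k) q := key n q (n - k) k hkn rfl f hf
  constructor
  · have : ∀ π : Equiv.Perm (Fin n),
        (if ∀ i : Fin k, π (Fin.castLE hkn i) = f i then q ^ dK π / psi n q else 0)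
        = (if ∀ i : Fin k, π (Fin.castLE hkn i) = f i then q ^ dK π else 0) / psi n q := by
      intro π; split_ifs <;> simp
    rw [Finset.sum_congr rfl (fun π _ => this π), ← Finset.sum_div, h2]
  · exact h2
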